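/- arXiv:2404.10729 — 2 statements merged into one kernel-verified Lean document; each statement's English description precedes it below -/
import Mathlib

section
/- (Simplification of tableaux) Let a be a partition of [n] and let T = (P_{A_1},...,P_{A_ℓ}) be a sequence of valid columns for the matching field of a, where column u has entries (i_u, j_u, k_u) with k_u = max(A_u) and block indices (I_u, J_u, K_u). Then there exists a sequence of valid columns T' = (P_{A'_1},...,P_{A'_ℓ}) with the same multiset of entries in each of the three rows as T, such that I'_1 ≤ I'_2 ≤ ... ≤ I'_ℓ and k'_1 ≤ k'_2 ≤ ... ≤ k'_ℓ. -/
/-- `(i, j, k)` is a valid column for the matching field of the partition with block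
function `β` (a monotone surjection `Fin n → Fin r` whose fibers are the consecutive
blocks) if it is the matching field ordering of the 3-subset `{i,j,k}`: either
`i < j < k` with `i` and `j` in the same block, or `j < i < k` with the block of `j`
different from (hence, by monotonicity, strictly before) the block of `i`. -/
def ValidCol {n r : ℕ} (β : Fin n → Fin r) (i j k : Fin n) : Prop :=
  (i < j ∧ j < k ∧ β i = β j) ∨ (j < i ∧ i < k ∧ β j ≠ β i)

namespace Stmt10Aux

variable {n r : ℕ} {β : Fin n → Fin r}

/-- A column, stored as a triple. -/
abbrev Col (n : ℕ) := Fin n × Fin n × Fin n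

/-- Validity of a column triple. -/
def VC (β : Fin n → Fin r) (c : Col n) : Prop := ValidCol β c.1 c.2.1 c.2.2

lemma lt_of_blt (hm : Monotone β) {a b : Fin n} (h : β a < β b) : a < b := by
  by_contra hb
  exact absurd (hm (not_lt.mp hb)) (not_le.mpr h)

lemma lt_k₁ {i j k : Fin n} (h : ValidCol β i j k) : i < k := by
  rcases h with ⟨h1, h2, _⟩ | ⟨_, h2, _⟩
  · exact h1.trans h2
  · exact h2

lemma valid_swap (hm : Monotone β) {i1 j1 k1 i2 j2 k2 : Fin n}
    (h1 : ValidCol β i1 j1 k1) (h2 : ValidCol β i2 j2 k2)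
    (hk : k1 ≤ k2) (hb : β i2 < β i1) :
    ValidCol β i2 j2 k1 ∧ ValidCol β i1 j1 k2 := by
  have hi : i2 < i1 := lt_of_blt hm hb
  have hik : i1 < k1 := lt_k₁ h1
  constructor
  · rcases h2 with ⟨a, b, c⟩ | ⟨a, b, c⟩
    · exact Or.inl ⟨a, lt_trans (lt_of_blt hm (c ▸ hb)) hik, c⟩
    · exact Or.inr ⟨a, hi.trans hik, c⟩
  · rcases h1 with ⟨a, b, c⟩ | ⟨a, b, c⟩
    · exact Or.inl ⟨a, b.trans_le hk, c⟩
    · exact Or.inr ⟨a, b.trans_le hk, c⟩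

/-- Exchange lemma: any two valid columns can be rearranged (exchanging entries within
each row) so that the first column has the smaller first-row block and smaller third
entry. -/
lemma exch (hm : Monotone β) (c d : Col n) (hc : VC β c) (hd : VC β d) :
    ∃ c' d' : Col n, VC β c' ∧ VC β d' ∧
      β c'.1 ≤ β d'.1 ∧ c'.2.2 ≤ d'.2.2 ∧ β c'.1 ≤ β c.1 ∧ c'.2.2 ≤ c.2.2 ∧
      ((c'.1, d'.1) = (c.1, d.1) ∨ (c'.1, d'.1) = (d.1, c.1)) ∧
      ((c'.2.1, d'.2.1) = (c.2.1, d.2.1) ∨ (c'.2.1, d'.2.1) = (d.2.1, c.2.1)) ∧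
      ((c'.2.2, d'.2.2) = (c.2.2, d.2.2) ∨ (c'.2.2, d'.2.2) = (d.2.2, c.2.2)) := by
  obtain ⟨i1, j1, k1⟩ := c
  obtain ⟨i2, j2, k2⟩ := d
  rcases le_total k1 k2 with hk | hk
  · rcases le_or_gt (β i1) (β i2) with hb | hb
    · exact ⟨(i1, j1, k1), (i2, j2, k2), hc, hd, hb, hk, le_refl _, le_refl _,
        Or.inl rfl, Or.inl rfl, Or.inl rfl⟩
    · obtain ⟨v1, v2⟩ := valid_swap hm hc hd hk hb
      exact ⟨(i2, j2, k1), (i1, j1, k2), v1, v2, le_of_lt hb, hk, le_of_lt hb, le_refl _,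
        Or.inr rfl, Or.inr rfl, Or.inl rfl⟩
  · rcases le_or_gt (β i2) (β i1) with hb | hb
    · exact ⟨(i2, j2, k2), (i1, j1, k1), hd, hc, hb, hk, hb, hk,
        Or.inr rfl, Or.inr rfl, Or.inr rfl⟩
    · obtain ⟨v1, v2⟩ := valid_swap hm hd hc hk hb
      exact ⟨(i1, j1, k2), (i2, j2, k1), v1, v2, le_of_lt hb, hk, le_refl _, hk,
        Or.inl rfl, Or.inl rfl, Or.inr rfl⟩

lemma perm_helper {α : Type*} {a' b' b x y : α} {X Y : List α} (q : (x :: X).Perm (y :: Y))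
    (hp : (y, b) = (a', b') ∨ (y, b) = (b', a')) :
    (x :: b :: X).Perm (a' :: b' :: Y) := by
  have base : (x :: b :: X).Perm (b :: y :: Y) := (List.Perm.swap b x X).trans (q.cons b)
  rcases hp with hp | hp
  · obtain ⟨e1, e2⟩ := Prod.mk.inj hp
    subst e1; subst e2
    exact base.trans (List.Perm.swap _ _ _)
  · obtain ⟨e1, e2⟩ := Prod.mk.inj hp
    subst e1; subst e2
    exact base

/-- Combing: given a valid column `h` and a list of valid columns `L`, exchange entries
so as to obtain a head column dominated by all columns of the new list. -/
lemma comb (hm : Monotone β) : ∀ (L : List (Col n)) (h : Col n), VC β h →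
    (∀ c ∈ L, VC β c) →
    ∃ (h' : Col n) (L' : List (Col n)), VC β h' ∧ (∀ c ∈ L', VC β c) ∧
      β h'.1 ≤ β h.1 ∧ h'.2.2 ≤ h.2.2 ∧
      (∀ c ∈ L', β h'.1 ≤ β c.1 ∧ h'.2.2 ≤ c.2.2) ∧
      ((h'.1 :: L'.map (·.1)).Perm (h.1 :: L.map (·.1))) ∧
      ((h'.2.1 :: L'.map (·.2.1)).Perm (h.2.1 :: L.map (·.2.1))) ∧
      ((h'.2.2 :: L'.map (·.2.2)).Perm (h.2.2 :: L.map (·.2.2)))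
  | [], h, hh, _ => ⟨h, [], hh, by simp, le_refl _, le_refl _, by simp,
      .refl _, .refl _, .refl _⟩
  | c :: L, h, hh, hL => by
    obtain ⟨c1, d1, hc1, hd1, hle1, hle2, hhead1, hhead2, pi, pj, pk⟩ :=
      exch hm h c hh (hL c (by simp))
    obtain ⟨h', L', vh', vL', hb1, hb2, hdom, q1, q2, q3⟩ :=
      comb hm L c1 hc1 (fun x hx => hL x (by simp [hx]))
    refine ⟨h', d1 :: L', vh', ?_, hb1.trans hhead1, hb2.trans hhead2, ?_, ?_, ?_, ?_⟩
    · intro x hx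
      rcases List.mem_cons.mp hx with rfl | hx
      · exact hd1
      · exact vL' x hx
    · intro x hx
      rcases List.mem_cons.mp hx with rfl | hx
      · exact ⟨hb1.trans hle1, hb2.trans hle2⟩
      · exact hdom x hx
    · simpa using perm_helper q1 pi
    · simpa using perm_helper q2 pj
    · simpa using perm_helper q3 pk

/-- Sorting: any list of valid columns can be rearranged, with row contents preserved,
into a list that is pairwise sorted by (first-row block, third entry). -/
lemma sortList (hm : Monotone β) : ∀ (N : ℕ) (L : List (Col n)), L.length ≤ N →
    (∀ c ∈ L, VC β c) →
    ∃ L' : List (Col n), (∀ c ∈ L', VC β c) ∧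
      L'.Pairwise (fun c d => β c.1 ≤ β d.1 ∧ c.2.2 ≤ d.2.2) ∧
      ((L'.map (·.1)).Perm (L.map (·.1))) ∧
      ((L'.map (·.2.1)).Perm (L.map (·.2.1))) ∧
      ((L'.map (·.2.2)).Perm (L.map (·.2.2)))
  | _, [], _, _ => ⟨[], by simp, List.Pairwise.nil, .refl _, .refl _, .refl _⟩
  | 0, c :: L, hlen, _ => absurd hlen (by simp)
  | N + 1, h :: T, hlen, hv => by
    obtain ⟨h', T', vh', vT', _, _, hdom, q1, q2, q3⟩ :=
      comb hm T h (hv h (by simp)) (fun c hc => hv c (by simp [hc]))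
    have hTlen : T'.length ≤ N := by
      have h1 := q1.length_eq
      simp only [List.length_cons, List.length_map] at h1
      simp only [List.length_cons] at hlen
      omega
    obtain ⟨T'', vT'', pw, r1, r2, r3⟩ := sortList hm N T' hTlen vT'
    refine ⟨h' :: T'', ?_, ?_, ?_, ?_, ?_⟩
    · intro x hx
      rcases List.mem_cons.mp hx with rfl | hx
      · exact vh'
      · exact vT'' x hx
    · refine List.pairwise_cons.mpr ⟨?_, pw⟩
      intro c hc
      constructor
      · have h1 : c.1 ∈ T''.map (·.1) := List.mem_map_of_mem hc
        obtain ⟨d, hd, hde⟩ := List.mem_map.mp (r1.subset h1)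
        exact hde ▸ (hdom d hd).1
      · have h3 : c.2.2 ∈ T''.map (·.2.2) := List.mem_map_of_mem hc
        obtain ⟨d, hd, hde⟩ := List.mem_map.mp (r3.subset h3)
        exact hde ▸ (hdom d hd).2
    · simpa using (r1.cons h'.1).trans q1
    · simpa using (r2.cons h'.2.1).trans q2
    · simpa using (r3.cons h'.2.2).trans q3

end Stmt10Aux

open Stmt10Aux in
/-- (Simplification of tableaux.)  Given a tableau `T` with `ℓ` valid columns
`(i_u, j_u, k_u)`, there is a tableau `T'` of valid columns `(i'_u, j'_u, k'_u)` with the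
same multiset of entries in each of the three rows as `T`, such that the block indices
`β (i'_u)` of the first row are weakly increasing, and the third-row entries `k'_u`
(automatically the maxima of the columns) are weakly increasing. -/
theorem stmt_10 (n r ℓ : ℕ) (β : Fin n → Fin r)
    (hmono : Monotone β) (hsurj : Function.Surjective β)
    (i j k : Fin ℓ → Fin n)
    (hvalid : ∀ u, ValidCol β (i u) (j u) (k u)) :
    ∃ i' j' k' : Fin ℓ → Fin n,
      (∀ u, ValidCol β (i' u) (j' u) (k' u)) ∧
      Monotone (fun u => β (i' u)) ∧
      Monotone k' ∧
      Multiset.map i' Finset.univ.val = Multiset.map i Finset.univ.val ∧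
      Multiset.map j' Finset.univ.val = Multiset.map j Finset.univ.val ∧
      Multiset.map k' Finset.univ.val = Multiset.map k Finset.univ.val := by
  classical
  have hvL : ∀ c ∈ List.ofFn (fun u => ((i u, j u, k u) : Col n)), VC β c := by
    intro c hc
    obtain ⟨u, hu⟩ := List.mem_ofFn.mp hc
    exact hu ▸ hvalid u
  obtain ⟨L', vL', pw, p1, p2, p3⟩ :=
    sortList hmono (List.ofFn (fun u => ((i u, j u, k u) : Col n))).length _ le_rfl hvL
  have e : L'.length = ℓ := by
    have h1 := p1.length_eq
    simpa using h1
  subst e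
  have key : ∀ g : Col n → Fin n,
      List.ofFn (fun u => g (L'.get u)) = L'.map g := by
    intro g
    rw [show (fun u => g (L'.get u)) = g ∘ L'.get from rfl, ← List.map_ofFn, List.ofFn_get]
  refine ⟨fun u => (L'.get u).1, fun u => (L'.get u).2.1, fun u => (L'.get u).2.2,
    ?_, ?_, ?_, ?_, ?_, ?_⟩
  · intro u
    exact vL' _ (L'.get_mem u)
  · intro u v huv
    rcases eq_or_lt_of_le huv with rfl | hlt
    · exact le_rfl
    · exact ((List.pairwise_iff_get.mp pw) u v hlt).1
  · intro u v huv
    rcases eq_or_lt_of_le huv with rfl | hlt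
    · exact le_rfl
    · exact ((List.pairwise_iff_get.mp pw) u v hlt).2
  · rw [Fin.univ_val_map, Fin.univ_val_map, key (·.1)]
    exact Quot.sound (show List.Perm _ _ by simpa [Function.comp_def] using p1)
  · rw [Fin.univ_val_map, Fin.univ_val_map, key (·.2.1)]
    exact Quot.sound (show List.Perm _ _ by simpa [Function.comp_def] using p2)
  · rw [Fin.univ_val_map, Fin.univ_val_map, key (·.2.2)]
    exact Quot.sound (show List.Perm _ _ by simpa [Function.comp_def] using p3)
end

section
/- Let I be a monomial ideal in K[x_1,...,x_n] with linear quotients with respect to m_1,...,m_k, with decomposition function b (sending a monomial m ∈ I to the generator m_j with j minimal such that m ∈ (m_1,...,m_j)). If b is regular, i.e. set(b(x_t · m)) ⊆ set(m) for each generator m and each variable x_t ∈ set(m), then b satisfies the exchange property: for each generator m and all x_s, x_t ∈ set(m), b(x_s · b(x_t · m)) = b(x_t · b(x_s · m)), where b(x_u · m') is interpreted as m' whenever x_u ∉ set(m'). -/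
open MvPolynomial

/-- Linear quotients for an ordered list of generators: each colon ideal of the span of
the earlier generators by a later generator is generated by a subset of the variables. -/
def LinQuot {σ : Type} {K : Type} [Field K] (L : List (MvPolynomial σ K)) : Prop :=
  ∀ j : Fin L.length, ∃ S : Set σ,
    (Ideal.span {m | m ∈ L.take j.val}).colon (Ideal.span {L.get j}) =
      Ideal.span ((fun s => (X s : MvPolynomial σ K)) '' S)

/-- `set(m_j)`: the set of variables `x_s` with `x_s · m_j ∈ (m_1,…,m_{j-1})`.  When the
list has linear quotients, these variables generate the colon ideal
`(m_1,…,m_{j-1}) : m_j`. -/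
def SetOf {σ : Type} {K : Type} [Field K] (L : List (MvPolynomial σ K))
    (j : Fin L.length) : Set σ :=
  {s | (X s : MvPolynomial σ K) * L.get j ∈ Ideal.span {m | m ∈ L.take j.val}}

/-- Let `I ⊆ K[x_1,…,x_n]` be a monomial ideal with linear quotients with respect to the
minimal monomial generators `m_1,…,m_k`, and let `b` be the decomposition function:
for every monomial `m ∈ I`, `b m` is the generator `m_j` with `j` minimal such that
`m ∈ (m_1,…,m_j)` (so in particular `b (x_u · m') = m'` for a generator `m'` when
`x_u ∉ set(m')`).  If `b` is regular, i.e. `set(b(x_t · m)) ⊆ set(m)` for every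
generator `m` and every variable `x_t ∈ set(m)`, then `b` satisfies the exchange
property: `b(x_s · b(x_t · m)) = b(x_t · b(x_s · m))` for all `x_s, x_t ∈ set(m)`. -/
theorem stmt_19 (K : Type) [Field K] (n : ℕ)
    (L : List (MvPolynomial (Fin n) K))
    (hmon : ∀ u ∈ L, ∃ d : Fin n →₀ ℕ, u = monomial d 1)
    (hnd : L.Nodup)
    (hmin : ∀ u ∈ L, ∀ u' ∈ L, u ≠ u' → ¬ u ∣ u')
    (hlq : LinQuot L)
    (b : MvPolynomial (Fin n) K → MvPolynomial (Fin n) K)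
    (hb : ∀ m : MvPolynomial (Fin n) K, (∃ d : Fin n →₀ ℕ, m = monomial d 1) →
      m ∈ Ideal.span {u | u ∈ L} →
      ∃ j : Fin L.length, b m = L.get j ∧
        m ∈ Ideal.span {u | u ∈ L.take (j.val + 1)} ∧
        ∀ j' < j.val, m ∉ Ideal.span {u | u ∈ L.take (j' + 1)})
    (hreg : ∀ (p : Fin L.length) (s : Fin n), s ∈ SetOf L p →
      ∀ q : Fin L.length, b (X s * L.get p) = L.get q → SetOf L q ⊆ SetOf L p) :
    ∀ (p : Fin L.length) (s t : Fin n), s ∈ SetOf L p → t ∈ SetOf L p →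
      b (X s * b (X t * L.get p)) = b (X t * b (X s * L.get p)) := by
  classical
  have hdex : ∀ j : Fin L.length, ∃ e : Fin n →₀ ℕ, L.get j = monomial e 1 :=
    fun j => hmon _ (List.get_mem L j)
  choose d hd using hdex
  have hXmul : ∀ (s : Fin n) (e : Fin n →₀ ℕ),
      (X s : MvPolynomial (Fin n) K) * monomial e 1 =
        monomial (Finsupp.single s 1 + e) 1 := by
    intro s e; rw [X, monomial_mul, one_mul]
  have memTake : ∀ (v : ℕ) (e : Fin n →₀ ℕ),
      monomial e (1 : K) ∈ Ideal.span {u | u ∈ L.take v} ↔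
        ∃ j : Fin L.length, j.val < v ∧ d j ≤ e := by
    intro v e
    have hset : {u : MvPolynomial (Fin n) K | u ∈ L.take v} =
        (fun f => monomial f (1 : K)) '' {f | ∃ j : Fin L.length, j.val < v ∧ d j = f} := by
      ext u
      simp only [Set.mem_setOf_eq, Set.mem_image]
      constructor
      · intro h
        obtain ⟨i, hi, hg⟩ := List.mem_iff_getElem.1 h
        rw [List.length_take] at hi
        refine ⟨d ⟨i, lt_of_lt_of_le hi (min_le_right _ _)⟩,
          ⟨_, lt_of_lt_of_le hi (min_le_left _ _), rfl⟩, ?_⟩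
        rw [← hd]; simpa [List.getElem_take] using hg
      · rintro ⟨f, ⟨j, hjv, rfl⟩, rfl⟩
        rw [← hd]
        exact List.mem_take_iff_getElem.2 ⟨j.val, by simp [lt_min_iff, hjv, j.isLt], rfl⟩
    rw [hset, mem_ideal_span_monomial_image]
    have hsup : (monomial e (1 : K)).support = {e} := by
      rw [support_monomial, if_neg one_ne_zero]
    rw [hsup]
    simp only [Finset.mem_singleton, forall_eq, Set.mem_setOf_eq]
    constructor
    · rintro ⟨f, ⟨j, hj, rfl⟩, hle⟩; exact ⟨j, hj, hle⟩
    · rintro ⟨j, hj, hle⟩; exact ⟨d j, ⟨j, hj, rfl⟩, hle⟩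
  have memL : ∀ e : Fin n →₀ ℕ,
      (∃ j : Fin L.length, d j ≤ e) → monomial e (1 : K) ∈ Ideal.span {u | u ∈ L} := by
    intro e he
    have h := memTake L.length e
    rw [List.take_length] at h
    exact h.2 ⟨he.choose, he.choose.isLt, he.choose_spec⟩
  have getB : ∀ e : Fin n →₀ ℕ, (∃ i : Fin L.length, d i ≤ e) →
      ∃ j : Fin L.length, b (monomial e 1) = L.get j ∧ d j ≤ e ∧
        ∀ i : Fin L.length, d i ≤ e → j.val ≤ i.val := by
    intro e he
    obtain ⟨j, hbj, hmem, hminj⟩ := hb (monomial e 1) ⟨e, rfl⟩ (memL e he)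
    obtain ⟨i, hi, hdi⟩ := (memTake _ _).1 hmem
    have hij : i = j := by
      by_contra hne
      have hilt : i.val < j.val :=
        lt_of_le_of_ne (Nat.lt_succ_iff.1 hi) (fun hh => hne (Fin.ext hh))
      exact hminj i.val hilt ((memTake _ _).2 ⟨i, Nat.lt_succ_self _, hdi⟩)
    refine ⟨j, hbj, hij ▸ hdi, ?_⟩
    intro i' hdi'
    by_contra hlt
    push_neg at hlt
    exact hminj i'.val hlt ((memTake _ _).2 ⟨i', Nat.lt_succ_self _, hdi'⟩)
  have setofIff : ∀ (q : Fin L.length) (u : Fin n),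
      u ∈ SetOf L q ↔ ∃ j : Fin L.length, j.val < q.val ∧ d j ≤ Finsupp.single u 1 + d q := by
    intro q u
    rw [SetOf, Set.mem_setOf_eq, hd q, hXmul, memTake]
  have colonStep : ∀ (q : Fin L.length) (f : Fin n →₀ ℕ),
      (∃ i : Fin L.length, i.val < q.val ∧ d i ≤ f + d q) →
      ∃ u : Fin n, f u ≠ 0 ∧ u ∈ SetOf L q := by
    intro q f hmem
    obtain ⟨S, hS⟩ := hlq q
    have h1 : monomial f (1 : K) ∈
        Ideal.span ((fun s => (X s : MvPolynomial (Fin n) K)) '' S) := by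
      rw [← hS, Ideal.mem_colon_span_singleton]
      have hmul : monomial f (1 : K) * L.get q = monomial (f + d q) 1 := by
        rw [hd q, monomial_mul, one_mul]
      rw [hmul]
      exact (memTake _ _).2 hmem
    have h2 := mem_ideal_span_X_image.1 h1
    have hsup : (monomial f (1 : K)).support = {f} := by
      rw [support_monomial, if_neg one_ne_zero]
    obtain ⟨u, huS, hfu⟩ := h2 f (by rw [hsup]; exact Finset.mem_singleton_self f)
    refine ⟨u, hfu, ?_⟩
    have hXu : (X u : MvPolynomial (Fin n) K) ∈
        Ideal.span ((fun s => (X s : MvPolynomial (Fin n) K)) '' S) :=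
      Ideal.subset_span ⟨u, huS, rfl⟩
    rw [← hS, Ideal.mem_colon_span_singleton] at hXu
    exact hXu
  have key : ∀ (p : Fin L.length) (s t : Fin n), t ∈ SetOf L p →
      b (X s * b (X t * L.get p)) =
        b (monomial (Finsupp.single s 1 + (Finsupp.single t 1 + d p)) 1) := by
    intro p s t ht
    obtain ⟨i₀, hi₀, hdi₀⟩ := (setofIff p t).1 ht
    obtain ⟨q, hbq, hdq, hqmin⟩ := getB (Finsupp.single t 1 + d p) ⟨i₀, hdi₀⟩
    obtain ⟨a, hba, hda, hamin⟩ := getB (Finsupp.single s 1 + d q) ⟨q, le_add_self⟩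
    obtain ⟨c, hbc, hdc, hcmin⟩ := getB (Finsupp.single s 1 + (Finsupp.single t 1 + d p))
      ⟨q, le_trans hdq le_add_self⟩
    have e1 : X t * L.get p = monomial (Finsupp.single t 1 + d p) (1 : K) := by
      rw [hd p, hXmul]
    have e2 : X s * L.get q = monomial (Finsupp.single s 1 + d q) (1 : K) := by
      rw [hd q, hXmul]
    rw [e1, hbq, e2, hba, hbc]
    have hac : c.val ≤ a.val := hcmin a (le_trans hda (add_le_add_right hdq _))
    have haq : a.val ≤ q.val := hamin q le_add_self
    have hca : a.val ≤ c.val := by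
      by_contra hlt
      push_neg at hlt
      set w : Fin n →₀ ℕ := (Finsupp.single t 1 + d p) - d q with hwdef
      have hw : d q + w = Finsupp.single t 1 + d p := add_tsub_cancel_of_le hdq
      have noW : ∀ u : Fin n, w u ≠ 0 → u ∉ SetOf L q := by
        intro u hwu husq
        obtain ⟨j, hj, hdj⟩ := (setofIff q u).1 husq
        have hle : d j ≤ Finsupp.single t 1 + d p := by
          calc d j ≤ Finsupp.single u 1 + d q := hdj
            _ ≤ w + d q := add_le_add_left
              (by rwa [Finsupp.single_le_iff, Nat.one_le_iff_ne_zero]) _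
            _ = Finsupp.single t 1 + d p := by rw [add_comm, hw]
        exact absurd (hqmin j hle) (Nat.not_le.2 hj)
      have hEq : (Finsupp.single s 1 + w) + d q =
          Finsupp.single s 1 + (Finsupp.single t 1 + d p) := by
        rw [add_assoc, add_comm w (d q), hw]
      obtain ⟨u, hu, huq⟩ := colonStep q (Finsupp.single s 1 + w)
        ⟨c, lt_of_lt_of_le hlt haq, by rw [hEq]; exact hdc⟩
      rw [Finsupp.add_apply] at hu
      by_cases hwu : w u = 0
      · have hus : u = s := by
          rw [hwu, add_zero] at hu
          exact (Finsupp.single_apply_ne_zero.1 hu).1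
        subst hus
        have hsub : SetOf L a ⊆ SetOf L q := hreg q u huq a (by rw [e2]; exact hba)
        set w₂ : Fin n →₀ ℕ := (Finsupp.single u 1 + d q) - d a with hw2def
        have hw₂ : d a + w₂ = Finsupp.single u 1 + d q := add_tsub_cancel_of_le hda
        have hEq2 : (w₂ + w) + d a =
            Finsupp.single u 1 + (Finsupp.single t 1 + d p) := by
          rw [add_comm (w₂ + w) (d a), ← add_assoc, hw₂, add_assoc, hw]
        obtain ⟨u', hu', hua⟩ := colonStep a (w₂ + w) ⟨c, hlt, by rw [hEq2]; exact hdc⟩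
        rw [Finsupp.add_apply] at hu'
        by_cases hw2u : w₂ u' = 0
        · have hwu' : w u' ≠ 0 := by rwa [hw2u, zero_add] at hu'
          exact noW u' hwu' (hsub hua)
        · obtain ⟨j, hj, hdj⟩ := (setofIff a u').1 hua
          have hle : d j ≤ Finsupp.single u 1 + d q := by
            calc d j ≤ Finsupp.single u' 1 + d a := hdj
              _ ≤ w₂ + d a := add_le_add_left
                (by rwa [Finsupp.single_le_iff, Nat.one_le_iff_ne_zero]) _
              _ = Finsupp.single u 1 + d q := by rw [add_comm, hw₂]
          exact absurd (hamin j hle) (Nat.not_le.2 hj)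
      · exact noW u hwu huq
    have : a = c := Fin.ext (le_antisymm hca hac)
    rw [this]
  intro p s t hs ht
  rw [key p s t ht, key p t s hs, add_left_comm]
end
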